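/- arXiv:1802.03560 — 2 statements merged into one kernel-verified Lean document; each statement's English description precedes it below -/
import Mathlib

section
/- For every d-regular graph G = (V,E) with n vertices and m = nd/2 edges, and for every assignment of labels y : E → {+1, -1}, there exists an embedding x : V → ℝ^d such that for every edge (a,b) with label y, we have y · ⟨x_a, x_b⟩ > 1. -/
open scoped RealInnerProductSpace
open Submodule Set MeasureTheory

private lemma surj_of_indep {d : ℕ} {ι : Type*} [Fintype ι] (f : ι → EuclideanSpace ℝ (Fin d))
    (hf : LinearIndependent ℝ f) (c : ι → ℝ) :
    ∃ p : EuclideanSpace ℝ (Fin d), ∀ i, ⟪f i, p⟫ = c i := by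
  classical
  set Φ : EuclideanSpace ℝ (Fin d) →ₗ[ℝ] (ι → ℝ) :=
    LinearMap.pi (fun i => innerₛₗ ℝ (f i)) with hΦ
  have hker : LinearMap.ker Φ = (span ℝ (Set.range f))ᗮ := by
    ext z
    rw [LinearMap.mem_ker, Submodule.mem_orthogonal]
    constructor
    · intro h u hu
      have hle : span ℝ (Set.range f) ≤
          LinearMap.ker ((innerₛₗ ℝ (E := EuclideanSpace ℝ (Fin d))).flip z) := by
        rw [Submodule.span_le]
        rintro _ ⟨i, rfl⟩
        have := congrFun h i
        simpa [hΦ] using this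
      exact hle hu
    · intro h
      funext i
      exact h _ (Submodule.subset_span (Set.mem_range_self i))
  have hd : Module.finrank ℝ (EuclideanSpace ℝ (Fin d)) = d := finrank_euclideanSpace_fin
  have h1 : Module.finrank ℝ (span ℝ (Set.range f)) = Fintype.card ι := finrank_span_eq_card hf
  have h2 := Submodule.finrank_add_finrank_orthogonal (K := span ℝ (Set.range f)) (𝕜 := ℝ)
  have h3 := LinearMap.finrank_range_add_finrank_ker Φ
  have h4 : Module.finrank ℝ (ι → ℝ) = Fintype.card ι := Module.finrank_pi ℝ
  have hrange : LinearMap.range Φ = ⊤ := by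
    apply Submodule.eq_top_of_finrank_eq
    rw [hker] at h3
    omega
  obtain ⟨p, hp⟩ := (LinearMap.range_eq_top).1 hrange c
  exact ⟨p, fun i => congrFun hp i⟩

private lemma avoid_subspaces {d : ℕ} {ι : Type*} (W : Finset ι)
    (B : ι → Submodule ℝ (EuclideanSpace ℝ (Fin d)))
    (hB : ∀ w ∈ W, B w ≠ ⊤) {O : Set (EuclideanSpace ℝ (Fin d))}
    (hO : IsOpen O) (hne : O.Nonempty) :
    ∃ p ∈ O, ∀ w ∈ W, p ∉ B w := by
  have hz : volume (⋃ w ∈ (W : Set ι), (B w : Set (EuclideanSpace ℝ (Fin d)))) = 0 := by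
    rw [measure_biUnion_null_iff (W.countable_toSet)]
    intro w hw
    exact Measure.addHaar_submodule _ _ (hB w hw)
  have hOpos : volume O ≠ 0 := hO.measure_ne_zero volume hne
  have hns : ¬ O ⊆ ⋃ w ∈ (W : Set ι), (B w : Set (EuclideanSpace ℝ (Fin d))) := by
    intro hsub
    exact hOpos (measure_mono_null hsub hz)
  obtain ⟨p, hpO, hpB⟩ := Set.not_subset.1 hns
  exact ⟨p, hpO, fun w hw hmem => hpB (Set.mem_biUnion hw hmem)⟩

/-- For every `d`-regular graph `G` on a finite vertex set `V` and every
assignment of labels `y : V → V → ℝ` taking values `±1` on edges (symmetrically),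
there exists a `d`-dimensional embedding achieving margin `1` on every labeled edge. -/
theorem dRegular_perfect_fit {V : Type*} [Fintype V] (d : ℕ)
    (G : SimpleGraph V) [DecidableRel G.Adj] (hreg : G.IsRegularOfDegree d)
    (y : V → V → ℝ)
    (hsym : ∀ a b, y a b = y b a)
    (hpm : ∀ a b, G.Adj a b → y a b = 1 ∨ y a b = -1) :
    ∃ x : V → EuclideanSpace ℝ (Fin d),
      ∀ a b, G.Adj a b → y a b * ⟪x a, x b⟫ > 1 := by
  classical
  suffices H : ∀ T : Finset V, ∀ x : V → EuclideanSpace ℝ (Fin d),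
      (∀ w ∈ T, LinearIndependent ℝ (fun u : {u : V | G.Adj w u ∧ u ∉ T} => x u)) →
      (∀ a b, a ∉ T → b ∉ T → G.Adj a b → y a b * ⟪x a, x b⟫ > 1) →
      ∃ x' : V → EuclideanSpace ℝ (Fin d), ∀ a b, G.Adj a b → y a b * ⟪x' a, x' b⟫ > 1 by
    refine H Finset.univ (fun _ => 0) (fun w _ => ?_)
      (fun a b ha _ _ => absurd (Finset.mem_univ a) ha)
    haveI : IsEmpty {u : V | G.Adj w u ∧ u ∉ Finset.univ} :=
      ⟨fun u => u.2.2 (Finset.mem_univ _)⟩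
    exact linearIndependent_empty_type
  intro T
  induction T using Finset.strongInduction with
  | _ T ih =>
    intro x inv1 inv2
    rcases T.eq_empty_or_nonempty with rfl | ⟨v, hv⟩
    · exact ⟨x, fun a b hab =>
        inv2 a b (Finset.notMem_empty a) (Finset.notMem_empty b) hab⟩
    -- the set of already-assigned neighbours of `v`
    set A : Set V := {u : V | G.Adj v u ∧ u ∉ T} with hA
    haveI : Fintype ↥A := A.toFinite.fintype
    have hind : LinearIndependent ℝ (fun u : A => x u) := inv1 v hv
    obtain ⟨p₀, hp₀⟩ := surj_of_indep (fun u : A => x u) hind (fun u => 2 * y v u.1)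
    -- open feasible set
    set O : Set (EuclideanSpace ℝ (Fin d)) :=
      {p | ∀ u : V, G.Adj v u → u ∉ T → 1 < y v u * ⟪x u, p⟫} with hO
    have hOopen : IsOpen O := by
      have hOeq : O = ⋂ u ∈ A, {p : EuclideanSpace ℝ (Fin d) | 1 < y v u * ⟪x u, p⟫} := by
        ext p
        simp only [hO, hA, Set.mem_setOf_eq, Set.mem_iInter]
        exact ⟨fun h u hu => h u hu.1 hu.2, fun h u h1 h2 => h u ⟨h1, h2⟩⟩
      rw [hOeq]
      exact A.toFinite.isOpen_biInter fun u _ =>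
        isOpen_lt continuous_const (continuous_const.mul (continuous_const.inner continuous_id))
    have hOne : O.Nonempty := by
      refine ⟨p₀, fun u h1 h2 => ?_⟩
      have := hp₀ ⟨u, h1, h2⟩
      rw [this]
      rcases hpm v u h1 with h | h <;> rw [h] <;> norm_num
    -- bad subspaces
    set W : Finset V := (T.erase v).filter (fun w => G.Adj v w) with hW
    set B : V → Submodule ℝ (EuclideanSpace ℝ (Fin d)) :=
      fun w => span ℝ ((((G.neighborFinset w).erase v).image x : Finset (EuclideanSpace ℝ (Fin d))) :
        Set (EuclideanSpace ℝ (Fin d))) with hB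
    have hBproper : ∀ w ∈ W, B w ≠ ⊤ := by
      intro w hw
      rw [hW, Finset.mem_filter, Finset.mem_erase] at hw
      obtain ⟨⟨hwv, hwT⟩, hadj⟩ := hw
      have hvmem : v ∈ G.neighborFinset w := (SimpleGraph.mem_neighborFinset _ _ _).2 hadj.symm
      have hdeg : (G.neighborFinset w).card = d := hreg w
      have hd1 : 0 < d := hdeg ▸ Finset.card_pos.2 ⟨v, hvmem⟩
      have hcard : (((G.neighborFinset w).erase v).image x).card ≤ d - 1 := by
        calc (((G.neighborFinset w).erase v).image x).card
            ≤ ((G.neighborFinset w).erase v).card := Finset.card_image_le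
          _ = d - 1 := by rw [Finset.card_erase_of_mem hvmem, hdeg]
      intro htop
      have hle : Module.finrank ℝ (B w) ≤ d - 1 :=
        le_trans (finrank_span_finset_le_card _) hcard
      rw [htop, finrank_top, finrank_euclideanSpace_fin] at hle
      omega
    obtain ⟨p, hpO, hpB⟩ := avoid_subspaces W B hBproper hOopen hOne
    set x' : V → EuclideanSpace ℝ (Fin d) := Function.update x v p with hx'
    have hx'v : x' v = p := Function.update_self _ _ _
    have hx'ne : ∀ {u : V}, u ≠ v → x' u = x u := fun h => Function.update_of_ne h _ _
    have hnotT_ne : ∀ {u : V}, u ∈ T → u ≠ v → u ∈ T.erase v :=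
      fun h1 h2 => Finset.mem_erase.2 ⟨h2, h1⟩
    refine ih (T.erase v) (Finset.erase_ssubset hv) x' ?_ ?_
    · -- linear independence invariant
      intro w hw
      obtain ⟨hwv, hwT⟩ := Finset.mem_erase.1 hw
      by_cases hadj : G.Adj w v
      · have hseteq : {u : V | G.Adj w u ∧ u ∉ T.erase v}
            = insert v {u : V | G.Adj w u ∧ u ∉ T} := by
          ext u
          simp only [Set.mem_setOf_eq, Set.mem_insert_iff]
          constructor
          · rintro ⟨h1, h2⟩
            by_cases huv : u = v
            · exact Or.inl huv
            · exact Or.inr ⟨h1, fun hT => h2 (Finset.mem_erase.2 ⟨huv, hT⟩)⟩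
          · rintro (rfl | ⟨h1, h2⟩)
            · exact ⟨hadj, Finset.notMem_erase _ _⟩
            · exact ⟨h1, fun h => h2 (Finset.mem_erase.1 h).2⟩
        rw [hseteq]
        have hvnot : v ∉ {u : V | G.Adj w u ∧ u ∉ T} := fun h => h.2 hv
        refine (linearIndepOn_insert hvnot).2 ?_
        unfold LinearIndepOn
        constructor
        · have heq : (fun u : {u : V | G.Adj w u ∧ u ∉ T} => x' ↑u)
              = fun u : {u : V | G.Adj w u ∧ u ∉ T} => x ↑u :=
            funext fun u => hx'ne (fun h => u.2.2 (h ▸ hv))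
          rw [heq]
          exact inv1 w hwT
        · have himg : x' '' {u : V | G.Adj w u ∧ u ∉ T}
              ⊆ ((((G.neighborFinset w).erase v).image x : Finset (EuclideanSpace ℝ (Fin d))) :
                Set (EuclideanSpace ℝ (Fin d))) := by
            rintro _ ⟨u, hu, rfl⟩
            have hune : u ≠ v := fun h => hu.2 (h ▸ hv)
            rw [hx'ne hune]
            simp only [Finset.coe_image, Set.mem_image, Finset.mem_coe, Finset.mem_erase,
              SimpleGraph.mem_neighborFinset]
            exact ⟨u, ⟨hune, hu.1⟩, rfl⟩
          rw [hx'v]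
          intro hmem
          have hwW : w ∈ W := by
            rw [hW, Finset.mem_filter]
            exact ⟨Finset.mem_erase.2 ⟨hwv, hwT⟩, hadj.symm⟩
          exact hpB w hwW (Submodule.span_mono himg hmem)
      · have hseteq : {u : V | G.Adj w u ∧ u ∉ T.erase v} = {u : V | G.Adj w u ∧ u ∉ T} := by
          ext u
          simp only [Set.mem_setOf_eq]
          constructor
          · rintro ⟨h1, h2⟩
            refine ⟨h1, fun hT => ?_⟩
            by_cases huv : u = v
            · exact hadj (huv ▸ h1)
            · exact h2 (Finset.mem_erase.2 ⟨huv, hT⟩)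
          · rintro ⟨h1, h2⟩
            exact ⟨h1, fun h => h2 (Finset.mem_erase.1 h).2⟩
        rw [hseteq]
        have heq : (fun u : {u : V | G.Adj w u ∧ u ∉ T} => x' ↑u)
            = fun u : {u : V | G.Adj w u ∧ u ∉ T} => x ↑u :=
          funext fun u => hx'ne (fun h => u.2.2 (h ▸ hv))
        rw [heq]
        exact inv1 w hwT
    · -- margin invariant
      intro a b ha hb hab
      have hmemT : ∀ {u : V}, u ∉ T.erase v → u ≠ v → u ∉ T := by
        intro u h1 h2 hT
        exact h1 (Finset.mem_erase.2 ⟨h2, hT⟩)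
      by_cases hav : a = v
      · have hbv : b ≠ v := fun h => (G.ne_of_adj hab) (hav.trans h.symm)
        have hbT : b ∉ T := hmemT hb hbv
        have hab' : G.Adj v b := hav ▸ hab
        rw [hav, hx'v, hx'ne hbv, real_inner_comm]
        exact hpO b hab' hbT
      · by_cases hbv : b = v
        · have haT : a ∉ T := hmemT ha hav
          have hab' : G.Adj a v := hbv ▸ hab
          rw [hbv, hx'v, hx'ne hav, hsym a v]
          exact hpO a hab'.symm haT
        · exact (hx'ne hav) ▸ (hx'ne hbv) ▸ inv2 a b (hmemT ha hav) (hmemT hb hbv) hab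
end

section
/- By König's edge coloring theorem applied to a d-regular bipartite-double-cover argument (or Vizing-type decomposition), the edge set of any d-regular graph can be partitioned into at most 2d matchings; consequently, assigning to each vertex v the vector whose k-th coordinate encodes the labels of edges incident to v in a proper edge coloring with colors 1..2d, scaled appropriately, one obtains a 2d-dimensional embedding x with y_e · ⟨x_a, x_b⟩ > 1 for every labeled edge e = (a,b). -/
open scoped RealInnerProductSpace
open MeasureTheory


open Finset in
lemma exists_partial_coloring {V : Type*} [Fintype V] (d : ℕ) (hd : 0 < d)
    (G : SimpleGraph V) [DecidableRel G.Adj] (hreg : G.IsRegularOfDegree d) :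
    ∀ E' : Finset (Sym2 V), E' ⊆ G.edgeFinset →
      ∃ C : V → V → Fin (2 * d),
        (∀ a b, C a b = C b a) ∧
        (∀ a b c, b ≠ c → s(a, b) ∈ E' → s(a, c) ∈ E' → C a b ≠ C a c) := by
  classical
  have hfin : 0 < 2 * d := by omega
  intro E'
  induction E' using Finset.induction_on with
  | empty =>
    intro _
    exact ⟨fun _ _ => ⟨0, hfin⟩, fun _ _ => rfl, fun a b c _ h _ => by simp at h⟩
  | @insert e s he ih =>
    intro hsub
    have hssub : s ⊆ G.edgeFinset := fun t ht => hsub (Finset.mem_insert_of_mem ht)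
    obtain ⟨C, hCsym, hCprop⟩ := ih hssub
    induction e using Sym2.ind with
    | _ u v =>
      have hadj : G.Adj u v := by
        have := hsub (Finset.mem_insert_self _ _)
        rwa [SimpleGraph.mem_edgeFinset, SimpleGraph.mem_edgeSet] at this
      have hne : u ≠ v := hadj.ne
      -- used colors
      set Uu : Finset (Fin (2 * d)) :=
        ((G.neighborFinset u).filter (fun w => s(u, w) ∈ s)).image (fun w => C u w) with hUu
      set Uv : Finset (Fin (2 * d)) :=
        ((G.neighborFinset v).filter (fun w => s(v, w) ∈ s)).image (fun w => C v w) with hUv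
      have hcard : (Uu ∪ Uv).card < 2 * d := by
        have h1 : ((G.neighborFinset u).filter (fun w => s(u, w) ∈ s))
            ⊆ (G.neighborFinset u).erase v := by
          intro w hw
          rw [Finset.mem_filter] at hw
          refine Finset.mem_erase.2 ⟨?_, hw.1⟩
          rintro rfl
          exact he hw.2
        have h2 : ((G.neighborFinset v).filter (fun w => s(v, w) ∈ s))
            ⊆ (G.neighborFinset v).erase u := by
          intro w hw
          rw [Finset.mem_filter] at hw
          refine Finset.mem_erase.2 ⟨?_, hw.1⟩
          rintro rfl
          rw [Sym2.eq_swap] at hw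
          exact he hw.2
        have c1 : Uu.card ≤ d - 1 := by
          refine le_trans (Finset.card_image_le) (le_trans (Finset.card_le_card h1) ?_)
          rw [Finset.card_erase_of_mem (by rwa [SimpleGraph.mem_neighborFinset])]
          rw [SimpleGraph.card_neighborFinset_eq_degree, hreg u]
        have c2 : Uv.card ≤ d - 1 := by
          refine le_trans (Finset.card_image_le) (le_trans (Finset.card_le_card h2) ?_)
          rw [Finset.card_erase_of_mem (by rw [SimpleGraph.mem_neighborFinset]; exact hadj.symm)]
          rw [SimpleGraph.card_neighborFinset_eq_degree, hreg v]
        calc (Uu ∪ Uv).card ≤ Uu.card + Uv.card := Finset.card_union_le _ _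
          _ ≤ (d - 1) + (d - 1) := by omega
          _ < 2 * d := by omega
      obtain ⟨k, hk⟩ : ∃ k : Fin (2 * d), k ∉ Uu ∪ Uv := by
        by_contra hcon
        push_neg at hcon
        have : (Finset.univ : Finset (Fin (2 * d))) ⊆ Uu ∪ Uv := fun k _ => hcon k
        have := Finset.card_le_card this
        simp [Finset.card_univ] at this
        omega
      refine ⟨fun a b => if (a = u ∧ b = v) ∨ (a = v ∧ b = u) then k else C a b, ?_, ?_⟩
      · intro a b
        dsimp only
        by_cases h : (a = u ∧ b = v) ∨ (a = v ∧ b = u)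
        · rw [if_pos h, if_pos (by tauto)]
        · rw [if_neg h, if_neg (by tauto), hCsym]
      · intro a b c hbc hab hac
        dsimp only
        rw [Finset.mem_insert] at hab hac
        have hedge : ∀ x1 x2 : V, ((x1 = u ∧ x2 = v) ∨ (x1 = v ∧ x2 = u)) ↔ s(x1, x2) = s(u, v) := by
          intro x1 x2
          rw [Sym2.eq_iff]
        rcases hab with hab | hab <;> rcases hac with hac | hac
        · exfalso
          apply hbc
          have : s(a, b) = s(a, c) := hab.trans hac.symm
          rw [Sym2.eq_iff] at this
          rcases this with ⟨-, h⟩ | ⟨h1, h2⟩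
          · exact h
          · exact h2.trans h1
        · -- s(a,b) = e, s(a,c) ∈ s
          rw [if_pos ((hedge a b).2 hab)]
          have hc_ne : ¬((a = u ∧ c = v) ∨ (a = v ∧ c = u)) := by
            intro h
            exact he (((hedge a c).1 h) ▸ hac)
          rw [if_neg hc_ne]
          -- a = u or a = v
          rw [Sym2.eq_iff] at hab
          have hCacU : C a c ∈ Uu ∪ Uv := by
            have hadjac : G.Adj a c := by
              have := hssub hac
              rwa [SimpleGraph.mem_edgeFinset, SimpleGraph.mem_edgeSet] at this
            rcases hab with ⟨rfl, _⟩ | ⟨h1, h2⟩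
            · exact Finset.mem_union_left _ (Finset.mem_image.2 ⟨c,
                Finset.mem_filter.2 ⟨(SimpleGraph.mem_neighborFinset _ _ _).2 hadjac, hac⟩, rfl⟩)
            · subst h1
              exact Finset.mem_union_right _ (Finset.mem_image.2 ⟨c,
                Finset.mem_filter.2 ⟨(SimpleGraph.mem_neighborFinset _ _ _).2 hadjac, hac⟩, rfl⟩)
          intro hkk
          exact hk (hkk ▸ hCacU)
        · -- s(a,c) = e, s(a,b) ∈ s : symmetric
          rw [if_pos ((hedge a c).2 hac)]
          have hb_ne : ¬((a = u ∧ b = v) ∨ (a = v ∧ b = u)) := by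
            intro h
            exact he (((hedge a b).1 h) ▸ hab)
          rw [if_neg hb_ne]
          rw [Sym2.eq_iff] at hac
          have hCabU : C a b ∈ Uu ∪ Uv := by
            have hadjab : G.Adj a b := by
              have := hssub hab
              rwa [SimpleGraph.mem_edgeFinset, SimpleGraph.mem_edgeSet] at this
            rcases hac with ⟨rfl, _⟩ | ⟨h1, h2⟩
            · exact Finset.mem_union_left _ (Finset.mem_image.2 ⟨b,
                Finset.mem_filter.2 ⟨(SimpleGraph.mem_neighborFinset _ _ _).2 hadjab, hab⟩, rfl⟩)
            · subst h1
              exact Finset.mem_union_right _ (Finset.mem_image.2 ⟨b,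
                Finset.mem_filter.2 ⟨(SimpleGraph.mem_neighborFinset _ _ _).2 hadjab, hab⟩, rfl⟩)
          intro hkk
          exact hk (hkk.symm ▸ hCabU)
        · have hb_ne : ¬((a = u ∧ b = v) ∨ (a = v ∧ b = u)) := by
            intro h
            exact he (((hedge a b).1 h) ▸ hab)
          have hc_ne : ¬((a = u ∧ c = v) ∨ (a = v ∧ c = u)) := by
            intro h
            exact he (((hedge a c).1 h) ▸ hac)
          rw [if_neg hb_ne, if_neg hc_ne]
          exact hCprop a b c hbc hab hac


lemma exists_dual_vec {m : ℕ} {ι : Type*} [Fintype ι] (w : ι → EuclideanSpace ℝ (Fin m))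
    (h : LinearIndependent ℝ w) (c : ι → ℝ) :
    ∃ z : EuclideanSpace ℝ (Fin m), ∀ i, ⟪z, w i⟫ = c i := by
  classical
  set K : Submodule ℝ (EuclideanSpace ℝ (Fin m)) := Submodule.span ℝ (Set.range w) with hK
  let B : Module.Basis ι ℝ K := Module.Basis.span h
  let g : K →ₗ[ℝ] ℝ := ∑ j, c j • B.coord j
  let f : EuclideanSpace ℝ (Fin m) →ₗ[ℝ] ℝ := g.comp (K.orthogonalProjectionOnto).toLinearMap
  refine ⟨(InnerProductSpace.toDual ℝ _).symm (LinearMap.toContinuousLinearMap f), fun i => ?_⟩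
  rw [InnerProductSpace.toDual_symm_apply]
  have hmem : w i ∈ K := Submodule.subset_span ⟨i, rfl⟩
  have hproj : K.orthogonalProjectionOnto (w i) = ⟨w i, hmem⟩ :=
    Submodule.orthogonalProjectionOnto_mem_subspace_eq_self (⟨w i, hmem⟩ : K)
  have hBi : (⟨w i, hmem⟩ : K) = B i := by
    apply Subtype.ext
    exact congrArg Subtype.val (Module.Basis.span_apply h i).symm
  have h1 : (LinearMap.toContinuousLinearMap f) (w i) = f (w i) := rfl
  have h2 : f (w i) = g (K.orthogonalProjectionOnto (w i)) := rfl
  rw [h1, h2, hproj, hBi]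
  simp [g, Module.Basis.coord_apply, Module.Basis.repr_self, Finsupp.single_apply]

lemma exists_embedding {V : Type*} [Fintype V] (d : ℕ) (hd : 0 < d)
    (G : SimpleGraph V) [DecidableRel G.Adj] (hreg : G.IsRegularOfDegree d)
    (y : V → V → ℝ)
    (hsym : ∀ a b, y a b = y b a)
    (hpm : ∀ a b, G.Adj a b → y a b = 1 ∨ y a b = -1) :
    ∃ x : V → EuclideanSpace ℝ (Fin (2 * d)),
      ∀ a b, G.Adj a b → y a b * ⟪x a, x b⟫ > 1 := by
  classical
  let eidx : V → ℕ := fun v => ((Fintype.equivFin V) v : ℕ)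
  have heinj : Function.Injective eidx := fun a b h => by
    apply (Fintype.equivFin V).injective
    exact Fin.ext h
  let N : V → ℕ → Set V := fun w k => {u | G.Adj w u ∧ eidx u < k}
  have main : ∀ k : ℕ, ∃ x : V → EuclideanSpace ℝ (Fin (2 * d)),
      (∀ a b, G.Adj a b → eidx a < k → eidx b < k → 1 < y a b * ⟪x a, x b⟫) ∧
      (∀ w, LinearIndependent ℝ
        (fun p : ↥(x '' N w k) => (p : EuclideanSpace ℝ (Fin (2 * d))))) ∧
      Set.InjOn x {u | eidx u < k} := by
    intro k
    induction k with
    | zero =>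
      refine ⟨fun _ => 0, fun a b _ h => by omega, fun w => ?_, fun u hu => by simp at hu⟩
      have hN : (fun _ => (0 : EuclideanSpace ℝ (Fin (2 * d)))) '' N w 0 = ∅ := by
        have : N w 0 = ∅ := by ext u; simp [N]
        rw [this, Set.image_empty]
      rw [hN]
      haveI : IsEmpty ↥(∅ : Set (EuclideanSpace ℝ (Fin (2 * d)))) := Set.isEmpty_coe_sort.2 rfl
      exact linearIndependent_empty_type
    | succ k ih =>
      obtain ⟨x, hmar, hind, hinj⟩ := ih
      by_cases hex : ∃ v : V, eidx v = k
      · obtain ⟨v, hv⟩ := hex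
        have hne_v : ∀ u : V, eidx u < k → u ≠ v := by
          rintro u hu rfl; omega
        have hlt_succ : ∀ u : V, eidx u < k + 1 ↔ (eidx u < k ∨ u = v) := by
          intro u
          constructor
          · intro h
            rcases Nat.lt_succ_iff_lt_or_eq.1 h with h | h
            · exact Or.inl h
            · exact Or.inr (heinj (h.trans hv.symm))
          · rintro (h | rfl) <;> omega
        have hNsub : N v k ⊆ {u | eidx u < k} := fun u hu => hu.2
        have hinjN : Set.InjOn x (N v k) := hinj.mono hNsub
        have hfam : LinearIndependent ℝ (fun u : ↥(N v k) => x u) :=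
          (linearIndepOn_iff_image hinjN).2 (hind v)
        obtain ⟨z₀, hz₀⟩ := exists_dual_vec (fun u : ↥(N v k) => x u) hfam
          (fun u => 2 * y v u)
        set O : Set (EuclideanSpace ℝ (Fin (2 * d))) :=
          ⋂ (u : ↥(N v k)), {z | 1 < y v u * ⟪z, x u⟫} with hO
        have hO_open : IsOpen O := by
          refine isOpen_iInter_of_finite fun u => ?_
          exact isOpen_lt continuous_const
            (continuous_const.mul (Continuous.inner continuous_id continuous_const))
        have hO_ne : O.Nonempty := by
          refine ⟨z₀, Set.mem_iInter.2 fun u => ?_⟩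
          have h2 : ⟪z₀, x u⟫ = 2 * y v u := hz₀ u
          have hadj : G.Adj v u := u.2.1
          rcases hpm v u hadj with h | h <;>
            · simp only [Set.mem_setOf_eq, h2, h]; norm_num
        -- bad submodules
        let bad : V ⊕ V → Submodule ℝ (EuclideanSpace ℝ (Fin (2 * d))) := fun i =>
          match i with
          | Sum.inl w => Submodule.span ℝ (x '' (G.neighborSet w))
          | Sum.inr u => Submodule.span ℝ {x u}
        have hbad : ∀ i, bad i ≠ ⊤ := by
          have hfr : ∀ S : Submodule ℝ (EuclideanSpace ℝ (Fin (2 * d))),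
              Module.finrank ℝ S < 2 * d → S ≠ ⊤ := by
            intro S hS h
            rw [h, finrank_top, finrank_euclideanSpace_fin] at hS
            omega
          rintro (w | u)
          · apply hfr
            have himg : x '' (G.neighborSet w) = ↑((G.neighborFinset w).image x) := by
              rw [Finset.coe_image]
              simp [SimpleGraph.neighborFinset, Set.coe_toFinset]
            have hle : Module.finrank ℝ (Submodule.span ℝ (x '' (G.neighborSet w)))
                ≤ ((G.neighborFinset w).image x).card := by
              rw [himg]
              exact finrank_span_finset_le_card _
            have hcard : ((G.neighborFinset w).image x).card ≤ d := by
              refine le_trans (Finset.card_image_le) ?_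
              rw [SimpleGraph.card_neighborFinset_eq_degree, hreg w]
            calc Module.finrank ℝ (bad (Sum.inl w)) ≤ _ := hle
              _ ≤ d := hcard
              _ < 2 * d := by omega
          · apply hfr
            have h1 := finrank_span_finset_le_card (R := ℝ) ({x u} : Finset (EuclideanSpace ℝ (Fin (2 * d))))
            rw [Finset.coe_singleton, Finset.card_singleton] at h1
            calc Module.finrank ℝ (bad (Sum.inr u)) ≤ 1 := h1
              _ < 2 * d := by omega
        have hBnull : volume (⋃ i, (bad i : Set (EuclideanSpace ℝ (Fin (2 * d))))) = 0 :=
          measure_iUnion_null fun i => Measure.addHaar_submodule _ _ (hbad i)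
        have hOpos : 0 < volume O := hO_open.measure_pos volume hO_ne
        have hzex : ∃ z, z ∈ O ∧ z ∉ ⋃ i, (bad i : Set (EuclideanSpace ℝ (Fin (2 * d)))) := by
          by_contra hcon
          push_neg at hcon
          have : O ⊆ ⋃ i, (bad i : Set (EuclideanSpace ℝ (Fin (2 * d)))) := fun z hz => hcon z hz
          have := measure_mono (μ := volume) this
          rw [hBnull] at this
          exact absurd (le_antisymm this zero_le) (ne_of_gt hOpos)
        obtain ⟨z, hzO, hzB⟩ := hzex
        have hz_not : ∀ i, z ∉ (bad i : Set (EuclideanSpace ℝ (Fin (2 * d)))) := by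
          intro i hi
          exact hzB (Set.mem_iUnion.2 ⟨i, hi⟩)
        set x' : V → EuclideanSpace ℝ (Fin (2 * d)) := Function.update x v z with hx'
        have hx'v : x' v = z := Function.update_self v z x
        have hx'ne : ∀ u : V, u ≠ v → x' u = x u := fun u hu => Function.update_of_ne hu z x
        have hzOmem : ∀ u : ↥(N v k), 1 < y v u * ⟪z, x u⟫ := by
          intro u
          exact Set.mem_iInter.1 hzO u
        refine ⟨x', ?_, ?_, ?_⟩
        · -- margin
          intro a b hab ha hb
          by_cases hav : a = v
          · have hbv : b ≠ v := fun h => G.ne_of_adj hab (by rw [hav, h])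
            have hbk : eidx b < k := by
              rcases (hlt_succ b).1 hb with h | h
              · exact h
              · exact absurd h hbv
            rw [hav, hx'v, hx'ne b hbv]
            have := hzOmem ⟨b, hav ▸ hab, hbk⟩
            simpa [hav] using this
          · by_cases hbv : b = v
            · subst hbv
              have hak : eidx a < k := by
                rcases (hlt_succ a).1 ha with h | h
                · exact h
                · exact absurd h hav
              rw [hx'v, hx'ne a hav]
              have := hzOmem ⟨a, hab.symm, hak⟩
              rwa [hsym a b, real_inner_comm]
            · have hak : eidx a < k := by
                rcases (hlt_succ a).1 ha with h | h
                · exact h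
                · exact absurd h hav
              have hbk : eidx b < k := by
                rcases (hlt_succ b).1 hb with h | h
                · exact h
                · exact absurd h hbv
              rw [hx'ne a hav, hx'ne b hbv]
              exact hmar a b hab hak hbk
        · -- independence
          intro w
          have hvN : v ∉ N w k := fun h => by
            have := h.2; omega
          have himg_eq : x' '' N w k = x '' N w k := by
            apply Set.image_congr
            intro u hu
            exact hx'ne u (hne_v u hu.2)
          by_cases hwv : G.Adj w v
          · have hNk : N w (k + 1) = insert v (N w k) := by
              ext u
              simp only [N, Set.mem_setOf_eq, Set.mem_insert_iff]
              constructor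
              · rintro ⟨hadj, hlt⟩
                rcases (hlt_succ u).1 hlt with h | h
                · exact Or.inr ⟨hadj, h⟩
                · exact Or.inl h
              · rintro (rfl | ⟨hadj, hlt⟩)
                · exact ⟨hwv, by omega⟩
                · exact ⟨hadj, by omega⟩
            have himg : x' '' N w (k + 1) = insert z (x '' N w k) := by
              rw [hNk, Set.image_insert_eq, hx'v, himg_eq]
            rw [himg]
            refine LinearIndepOn.id_insert (hind w) ?_
            have hmono : Submodule.span ℝ (x '' N w k) ≤ bad (Sum.inl w) := by
              apply Submodule.span_mono
              exact Set.image_mono (fun u hu => hu.1)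
            intro hmem
            exact hz_not (Sum.inl w) (hmono hmem)
          · have hNk : N w (k + 1) = N w k := by
              ext u
              simp only [N, Set.mem_setOf_eq]
              constructor
              · rintro ⟨hadj, hlt⟩
                rcases (hlt_succ u).1 hlt with h | h
                · exact ⟨hadj, h⟩
                · exact absurd (h ▸ hadj) hwv
              · rintro ⟨hadj, hlt⟩
                exact ⟨hadj, by omega⟩
            rw [hNk, himg_eq]
            exact hind w
        · -- injectivity
          intro u1 h1 u2 h2 heq
          simp only [Set.mem_setOf_eq] at h1 h2
          by_cases h1v : u1 = v
          · by_cases h2v : u2 = v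
            · rw [h1v, h2v]
            · exfalso
              rw [h1v, hx'v, hx'ne u2 h2v] at heq
              exact hz_not (Sum.inr u2) (heq ▸ Submodule.mem_span_singleton_self (x u2))
          · by_cases h2v : u2 = v
            · exfalso
              rw [h2v, hx'v, hx'ne u1 h1v] at heq
              exact hz_not (Sum.inr u1) (heq ▸ Submodule.mem_span_singleton_self (x u1))
            · have hu1 : eidx u1 < k := by
                rcases (hlt_succ u1).1 h1 with h | h
                · exact h
                · exact absurd h h1v
              have hu2 : eidx u2 < k := by
                rcases (hlt_succ u2).1 h2 with h | h
                · exact h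
                · exact absurd h h2v
              rw [hx'ne u1 h1v, hx'ne u2 h2v] at heq
              exact hinj hu1 hu2 heq
      · -- no vertex with index k
        have hiff : ∀ u : V, eidx u < k + 1 ↔ eidx u < k := by
          intro u
          constructor
          · intro h
            rcases Nat.lt_succ_iff_lt_or_eq.1 h with h | h
            · exact h
            · exact absurd ⟨u, h⟩ hex
          · omega
        have hNk : ∀ w, N w (k + 1) = N w k := by
          intro w
          ext u
          simp only [N, Set.mem_setOf_eq, hiff]
        refine ⟨x, fun a b hab ha hb => hmar a b hab ((hiff a).1 ha) ((hiff b).1 hb),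
          fun w => by rw [hNk]; exact hind w, fun u1 h1 u2 h2 heq => ?_⟩
        exact hinj ((hiff u1).1 h1) ((hiff u2).1 h2) heq
  obtain ⟨x, hmar, -, -⟩ := main (Fintype.card V)
  refine ⟨x, fun a b hab => ?_⟩
  exact hmar a b hab ((Fintype.equivFin V a).2) ((Fintype.equivFin V b).2)


/-- Every `d`-regular graph admits a proper edge coloring of its edges with
at most `2d` colors (its edge set partitions into at most `2d` matchings), and
consequently, for any `±1` edge labeling, there is a `2d`-dimensional embedding
fitting all edge labels with margin `> 1`. -/
theorem dRegular_edgeColoring_and_2d_embedding {V : Type*} [Fintype V] (d : ℕ) (hd : 0 < d)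
    (G : SimpleGraph V) [DecidableRel G.Adj] (hreg : G.IsRegularOfDegree d)
    (y : V → V → ℝ)
    (hsym : ∀ a b, y a b = y b a)
    (hpm : ∀ a b, G.Adj a b → y a b = 1 ∨ y a b = -1) :
    (∃ C : V → V → Fin (2 * d),
        (∀ a b, C a b = C b a) ∧
        (∀ a b c, G.Adj a b → G.Adj a c → b ≠ c → C a b ≠ C a c)) ∧
    (∃ x : V → EuclideanSpace ℝ (Fin (2 * d)),
        ∀ a b, G.Adj a b → y a b * ⟪x a, x b⟫ > 1) := by
  constructor
  · obtain ⟨C, hCsym, hCprop⟩ :=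
      exists_partial_coloring d hd G hreg G.edgeFinset (le_refl _)
    refine ⟨C, hCsym, fun a b c hab hac hbc => ?_⟩
    exact hCprop a b c hbc (SimpleGraph.mem_edgeFinset.2 hab) (SimpleGraph.mem_edgeFinset.2 hac)
  · exact exists_embedding d hd G hreg y hsym hpm
end
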